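/- Let $k \subseteq K$ be number fields with rings of integers $\mathcal{O}_k \subseteq \mathcal{O}_K$. Let $\mathfrak{A}$ be a nonzero ideal of $\mathcal{O}_K$ and $B$ a nonzero ideal of $\mathcal{O}_k$. Then $(\mathfrak{A} + B\mathcal{O}_K) \cap \mathcal{O}_k = (\mathfrak{A} \cap \mathcal{O}_k) + B$. -/

import Mathlib

open NumberField

section Helpers

open UniqueFactorizationMonoid Multiset

namespace Stmt8Aux

variable {T : Type*} [CommRing T] [IsDedekindDomain T] [DecidableEq (Ideal T)]

theorem countNF_mul {I J : Ideal T} (hI : I ≠ ⊥) (hJ : J ≠ ⊥) (r : Ideal T) :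
    count r (normalizedFactors (I * J)) =
      count r (normalizedFactors I) + count r (normalizedFactors J) := by
  rw [normalizedFactors_mul hI hJ, Multiset.count_add]

theorem countNF_pow {I : Ideal T} (m : ℕ) (r : Ideal T) :
    count r (normalizedFactors (I ^ m)) = m * count r (normalizedFactors I) := by
  rw [normalizedFactors_pow, Multiset.count_nsmul]

theorem countNF_prime {J : Ideal T} (hJ : Prime J) (r : Ideal T) :
    count r (normalizedFactors J) = if r = J then 1 else 0 := by
  rw [normalizedFactors_irreducible hJ.irreducible, normalize_eq, Multiset.count_singleton]

theorem dvd_iff_count {I J : Ideal T} (hI : I ≠ ⊥) (hJ : J ≠ ⊥) :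
    I ∣ J ↔ ∀ r, count r (normalizedFactors I) ≤ count r (normalizedFactors J) := by
  rw [dvd_iff_normalizedFactors_le_normalizedFactors hI hJ, Multiset.le_iff_count]

theorem pow_dvd_iff_count {I J : Ideal T} (hI : I ≠ ⊥) (hJ : Prime J) (m : ℕ) :
    J ^ m ∣ I ↔ m ≤ count J (normalizedFactors I) := by
  rw [dvd_iff_count (pow_ne_zero m hJ.ne_zero) hI]
  constructor
  · intro h
    have := h J
    rwa [countNF_pow, countNF_prime hJ, if_pos rfl, mul_one] at this
  · intro h r
    rw [countNF_pow, countNF_prime hJ]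
    split_ifs with hr
    · subst hr; simpa using h
    · simp

theorem dvd_iff_one_le_count {I J : Ideal T} (hI : I ≠ ⊥) (hJ : Prime J) :
    J ∣ I ↔ 1 ≤ count J (normalizedFactors I) := by
  rw [← pow_dvd_iff_count hI hJ 1, pow_one]

theorem count_sup {I J : Ideal T} (hI : I ≠ ⊥) (hJ : J ≠ ⊥) (r : Ideal T) :
    count r (normalizedFactors (I ⊔ J)) =
      min (count r (normalizedFactors I)) (count r (normalizedFactors J)) := by
  rw [sup_eq_prod_inf_factors hI hJ, normalizedFactors_prod_of_prime ?_]
  · convert Multiset.count_inter r (normalizedFactors I) (normalizedFactors J)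
  intro p hp
  exact prime_of_normalized_factor p (Multiset.mem_inter.1 (by convert hp)).1

section Ext

variable {R S : Type*} [CommRing R] [CommRing S] [IsDedekindDomain R] [IsDedekindDomain S]
  [Algebra R S] [Algebra.IsIntegral R S] [DecidableEq (Ideal R)] [DecidableEq (Ideal S)]

theorem comap_prime_ne_bot {P : Ideal S} (hPb : P ≠ ⊥) :
    Ideal.comap (algebraMap R S) P ≠ ⊥ := by
  obtain ⟨x, hx, hx0⟩ := Submodule.exists_mem_ne_zero_of_ne_bot hPb
  exact Ideal.comap_ne_bot_of_integral_mem hx0 hx (Algebra.IsIntegral.isIntegral x)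

theorem comap_prime_prime {P : Ideal S} (hPb : P ≠ ⊥) [P.IsPrime] :
    Prime (Ideal.comap (algebraMap R S) P) :=
  (Ideal.prime_iff_isPrime (comap_prime_ne_bot hPb)).2 (Ideal.IsPrime.comap _)

theorem comap_eq_of_map_le {J : Ideal R} (hJb : J ≠ ⊥) (hJ : J.IsPrime) {P : Ideal S}
    [hP : P.IsPrime] (h : Ideal.map (algebraMap R S) J ≤ P) :
    Ideal.comap (algebraMap R S) P = J := by
  have h1 : J ≤ Ideal.comap (algebraMap R S) P := Ideal.map_le_iff_le_comap.1 h
  have h2 : (Ideal.comap (algebraMap R S) P).IsPrime := Ideal.IsPrime.comap _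
  exact ((hJ.isMaximal hJb).eq_of_le h2.ne_top h1).symm

variable (hinj : Function.Injective (algebraMap R S))
include hinj

/-- Key counting lemma: the multiplicity of a prime `P` in the extension of `I`
is the multiplicity of `comap P` in `I` times the ramification index of `P`. -/
theorem count_nf_map {I : Ideal R} (hI : I ≠ ⊥) {P : Ideal S} (hPb : P ≠ ⊥) [hP : P.IsPrime] :
    count P (normalizedFactors (Ideal.map (algebraMap R S) I)) =
      count (Ideal.comap (algebraMap R S) P) (normalizedFactors I) *
        count P (normalizedFactors
          (Ideal.map (algebraMap R S) (Ideal.comap (algebraMap R S) P))) := by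
  set f := algebraMap R S
  set p := Ideal.comap f P with hp
  have hpb : p ≠ ⊥ := comap_prime_ne_bot hPb
  have hpP : Prime p := comap_prime_prime hPb
  have hPprime : Prime P := (Ideal.prime_iff_isPrime hPb).2 hP
  set n := count p (normalizedFactors I) with hn
  obtain ⟨I', hI'eq⟩ : p ^ n ∣ I := (pow_dvd_iff_count hI hpP n).2 le_rfl
  have hI' : I' ≠ ⊥ := by
    rintro rfl
    rw [Ideal.mul_bot] at hI'eq
    exact hI hI'eq
  have hps : p ^ n ≠ ⊥ := pow_ne_zero _ hpP.ne_zero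
  have hcount0 : count p (normalizedFactors I') = 0 := by
    have h1 := countNF_mul hps hI' p
    rw [← hI'eq, countNF_pow, countNF_prime hpP, if_pos rfl, mul_one, ← hn] at h1
    omega
  have hmp : Ideal.map f p ≠ ⊥ := by
    rw [Ne, Ideal.map_eq_bot_iff_of_injective hinj]; exact hpb
  have hmI' : Ideal.map f I' ≠ ⊥ := by
    rw [Ne, Ideal.map_eq_bot_iff_of_injective hinj]; exact hI'
  have hzero : count P (normalizedFactors (Ideal.map f I')) = 0 := by
    by_contra h
    have h1 : P ∣ Ideal.map f I' := (dvd_iff_one_le_count hmI' hPprime).2 (by omega)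
    have h3 : I' ≤ p := Ideal.map_le_iff_le_comap.1 (Ideal.le_of_dvd h1)
    have h4 : p ∣ I' := Ideal.dvd_iff_le.2 h3
    have := (dvd_iff_one_le_count hI' hpP).1 h4
    omega
  rw [hI'eq, Ideal.map_mul, Ideal.map_pow, countNF_mul (pow_ne_zero _ hmp) hmI',
    countNF_pow, hzero, add_zero]

theorem one_le_count_map_comap {P : Ideal S} (hPb : P ≠ ⊥) [hP : P.IsPrime] :
    1 ≤ count P (normalizedFactors
        (Ideal.map (algebraMap R S) (Ideal.comap (algebraMap R S) P))) := by
  have hPprime : Prime P := (Ideal.prime_iff_isPrime hPb).2 hP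
  have hm : Ideal.map (algebraMap R S) (Ideal.comap (algebraMap R S) P) ≠ ⊥ := by
    rw [Ne, Ideal.map_eq_bot_iff_of_injective hinj]
    exact comap_prime_ne_bot hPb
  refine (dvd_iff_one_le_count hm hPprime).1 (Ideal.dvd_iff_le.2 ?_)
  exact Ideal.map_le_iff_le_comap.2 le_rfl

end Ext

end Stmt8Aux

end Helpers

open UniqueFactorizationMonoid Multiset Stmt8Aux

set_option maxHeartbeats 1000000 in
/-- For number fields `k ⊆ K`, a nonzero ideal `𝔄` of `𝓞 K` and a nonzero ideal
`B` of `𝓞 k`, the contraction of `𝔄 + B𝓞 K` to `𝓞 k` equals `(𝔄 ∩ 𝓞 k) + B`. -/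
theorem stmt_8 (k K : Type*) [Field k] [Field K] [NumberField k] [NumberField K]
    [Algebra k K] (𝔄 : Ideal (𝓞 K)) (h𝔄 : 𝔄 ≠ ⊥) (B : Ideal (𝓞 k)) (hB : B ≠ ⊥) :
    Ideal.comap (algebraMap (𝓞 k) (𝓞 K)) (𝔄 ⊔ Ideal.map (algebraMap (𝓞 k) (𝓞 K)) B) =
      Ideal.comap (algebraMap (𝓞 k) (𝓞 K)) 𝔄 ⊔ B := by
  classical
  set f := algebraMap (𝓞 k) (𝓞 K) with hf
  have hinj : Function.Injective f := FaithfulSMul.algebraMap_injective _ _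
  apply le_antisymm
  · -- hard direction
    intro x hx
    rw [Ideal.mem_comap] at hx
    set C := Ideal.comap f 𝔄 with hC
    have hCb : C ≠ ⊥ := by
      obtain ⟨a, ha, ha0⟩ := Submodule.exists_mem_ne_zero_of_ne_bot h𝔄
      exact Ideal.comap_ne_bot_of_integral_mem ha0 ha (Algebra.IsIntegral.isIntegral a)
    have hDb : C ⊔ B ≠ ⊥ := fun h => hB (le_bot_iff.1 (h ▸ le_sup_right))
    by_cases hx0 : x = 0
    · subst hx0; exact zero_mem _
    have hxb : Ideal.span {x} ≠ (⊥ : Ideal (𝓞 k)) := by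
      simpa [Ideal.span_singleton_eq_bot] using hx0
    have hmB : Ideal.map f B ≠ ⊥ := by
      rw [Ne, Ideal.map_eq_bot_iff_of_injective hinj]; exact hB
    rw [← Ideal.span_singleton_le_iff_mem, ← Ideal.dvd_iff_le, dvd_iff_count hDb hxb]
    intro J
    by_cases hJ0 : count J (normalizedFactors (C ⊔ B)) = 0
    · omega
    have hJmem : J ∈ normalizedFactors (C ⊔ B) :=
      Multiset.count_pos.1 (Nat.pos_of_ne_zero hJ0)
    have hJp : Prime J := prime_of_normalized_factor J hJmem
    have hJprime : J.IsPrime := (Ideal.prime_iff_isPrime hJp.ne_zero).1 hJp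
    rw [count_sup hCb hB J]
    set n := count J (normalizedFactors (Ideal.span {x})) with hn
    set b := count J (normalizedFactors B) with hb
    rcases le_or_gt b n with hcase | hcase
    · exact le_trans (min_le_right _ _) hcase
    refine le_trans (min_le_left _ _) ?_
    -- it remains to prove : count J (normalizedFactors C) ≤ n
    have hmJ : Ideal.map f J ≠ ⊥ := by
      rw [Ne, Ideal.map_eq_bot_iff_of_injective hinj]; exact hJp.ne_zero
    -- Step 1: for every prime P over J, count P (nf 𝔄) ≤ n * e_P
    have hover : ∀ P : Ideal (𝓞 K), P ≠ ⊥ → ∀ _ : P.IsPrime, Ideal.comap f P = J →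
        count P (normalizedFactors 𝔄) ≤
          n * count P (normalizedFactors (Ideal.map f J)) := by
      intro P hPb hPp hPJ
      have hPprime : Prime P := (Ideal.prime_iff_isPrime hPb).2 hPp
      have hfx : Ideal.span {f x} ≤ 𝔄 ⊔ Ideal.map f B :=
        (Ideal.span_singleton_le_iff_mem _).2 hx
      have hfxb : Ideal.span {f x} ≠ (⊥ : Ideal (𝓞 K)) := by
        simp only [Ne, Ideal.span_singleton_eq_bot]
        exact fun h => hx0 (hinj (by simpa using h))
      have hABb : 𝔄 ⊔ Ideal.map f B ≠ ⊥ := fun h => h𝔄 (le_bot_iff.1 (h ▸ le_sup_left))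
      have hcle := count_le_of_ideal_ge hfx hfxb P
      have hspan : Ideal.span {f x} = Ideal.map f (Ideal.span {x}) := by
        rw [Ideal.map_span, Set.image_singleton]
      rw [hspan, count_nf_map hinj hxb hPb, count_sup h𝔄 hmB P,
        count_nf_map hinj hB hPb, hPJ, ← hn, ← hb] at hcle
      have heP := one_le_count_map_comap hinj hPb (R := 𝓞 k)
      rw [hPJ] at heP
      set e := count P (normalizedFactors (Ideal.map f J)) with he
      have hlt : n * e < b * e := by
        have : n < b := hcase
        exact Nat.mul_lt_mul_of_lt_of_le this (le_refl e) (by omega)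
      omega
    -- Step 2: construct an element y of C = 𝔄 ∩ 𝓞k with count J (nf (y)) ≤ n
    set Q : Multiset (Ideal (𝓞 k)) :=
      ((normalizedFactors 𝔄).map (Ideal.comap f)).filter (· ≠ J) with hQdef
    have hQprime : ∀ q ∈ Q, Prime q := by
      intro q hq
      obtain ⟨hq1, _⟩ := Multiset.mem_filter.1 hq
      obtain ⟨P, hP, rfl⟩ := Multiset.mem_map.1 hq1
      have hPp : Prime P := prime_of_normalized_factor P hP
      have : P.IsPrime := (Ideal.prime_iff_isPrime hPp.ne_zero).1 hPp
      exact comap_prime_prime hPp.ne_zero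
    set W := Q.prod with hW
    have hWb : W ≠ ⊥ := by
      refine Multiset.prod_ne_zero fun h0 => ?_
      exact (hQprime ⊥ h0).ne_zero rfl
    have hcountJW : count J (normalizedFactors W) = 0 := by
      by_contra h
      have hJdW : J ∣ W := (dvd_iff_one_le_count hWb hJp).2 (by omega)
      obtain ⟨q, hqQ, hJq⟩ := hJp.exists_mem_multiset_dvd hJdW
      have hqp : Prime q := hQprime q hqQ
      have hqp' : q.IsPrime := (Ideal.prime_iff_isPrime hqp.ne_zero).1 hqp
      have : q = J :=
        (hqp'.isMaximal hqp.ne_zero).eq_of_le hJprime.ne_top (Ideal.le_of_dvd hJq)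
      exact (Multiset.mem_filter.1 hqQ).2 this
    set Tc := (normalizedFactors 𝔄).card with hTc
    set Y := J ^ n * W ^ Tc with hY
    have hYb : Y ≠ ⊥ := mul_ne_zero (pow_ne_zero _ hJp.ne_zero) (pow_ne_zero _ hWb)
    have hcountY : ∀ r, count r (normalizedFactors Y) =
        n * count r (normalizedFactors J) + Tc * count r (normalizedFactors W) := by
      intro r
      rw [hY, countNF_mul (pow_ne_zero _ hJp.ne_zero) (pow_ne_zero _ hWb),
        countNF_pow, countNF_pow]
    have hcountYJ : count J (normalizedFactors Y) = n := by
      rw [hcountY, countNF_prime hJp, if_pos rfl, hcountJW]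
      omega
    have hYJ_lt : Y * J < Y := by
      refine lt_of_le_of_ne Ideal.mul_le_left fun h => ?_
      have : J = ⊤ := mul_left_cancel₀ hYb (h.trans (Ideal.mul_top Y).symm)
      exact hJprime.ne_top this
    obtain ⟨y, hyY, hyJ⟩ := SetLike.exists_of_lt hYJ_lt
    have hy0 : y ≠ 0 := fun h => hyJ (h ▸ zero_mem _)
    have hyb : Ideal.span {y} ≠ (⊥ : Ideal (𝓞 k)) := by
      simpa [Ideal.span_singleton_eq_bot] using hy0
    have hYdvd : Y ∣ Ideal.span {y} :=
      Ideal.dvd_iff_le.2 ((Ideal.span_singleton_le_iff_mem _).2 hyY)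
    have hcounty : ∀ r, count r (normalizedFactors Y) ≤
        count r (normalizedFactors (Ideal.span {y})) := (dvd_iff_count hYb hyb).1 hYdvd
    have hyn : count J (normalizedFactors (Ideal.span {y})) ≤ n := by
      by_contra hcon
      push_neg at hcon
      apply hyJ
      have hdv : Y * J ∣ Ideal.span {y} := by
        rw [dvd_iff_count (mul_ne_zero hYb hJp.ne_zero) hyb]
        intro r
        rw [countNF_mul hYb hJp.ne_zero, countNF_prime hJp]
        split_ifs with hr
        · subst hr; rw [hcountYJ]; omega
        · rw [add_zero]; exact hcounty r
      exact (Ideal.span_singleton_le_iff_mem _).1 (Ideal.le_of_dvd hdv)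
    have hmyb : Ideal.map f (Ideal.span {y}) ≠ ⊥ := by
      rw [Ne, Ideal.map_eq_bot_iff_of_injective hinj]; exact hyb
    -- y lies in C
    have hyC : y ∈ C := by
      have hdvd𝔄 : 𝔄 ∣ Ideal.map f (Ideal.span {y}) := by
        rw [dvd_iff_count h𝔄 hmyb]
        intro P
        by_cases hP0 : count P (normalizedFactors 𝔄) = 0
        · omega
        have hPmem : P ∈ normalizedFactors 𝔄 := Multiset.count_pos.1 (Nat.pos_of_ne_zero hP0)
        have hPprime : Prime P := prime_of_normalized_factor P hPmem
        have hPp : P.IsPrime := (Ideal.prime_iff_isPrime hPprime.ne_zero).1 hPprime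
        have hqb : Ideal.comap f P ≠ ⊥ := comap_prime_ne_bot hPprime.ne_zero
        have hqprime : Prime (Ideal.comap f P) := comap_prime_prime hPprime.ne_zero
        rw [count_nf_map hinj hyb hPprime.ne_zero]
        have heP := one_le_count_map_comap hinj hPprime.ne_zero (R := 𝓞 k)
        by_cases hqJ : Ideal.comap f P = J
        · have h1 := hover P hPprime.ne_zero hPp hqJ
          have h2 : n ≤ count (Ideal.comap f P) (normalizedFactors (Ideal.span {y})) := by
            have := hcounty (Ideal.comap f P)
            rw [hqJ] at this ⊢
            omega
          calc count P (normalizedFactors 𝔄)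
              ≤ n * count P (normalizedFactors (Ideal.map f (Ideal.comap f P))) := by
                rw [hqJ]; exact h1
            _ ≤ count (Ideal.comap f P) (normalizedFactors (Ideal.span {y})) *
                count P (normalizedFactors (Ideal.map f (Ideal.comap f P))) :=
                Nat.mul_le_mul_right _ h2
        · have hqQ : Ideal.comap f P ∈ Q :=
            Multiset.mem_filter.2 ⟨Multiset.mem_map_of_mem _ hPmem, hqJ⟩
          have hqWd : Ideal.comap f P ∣ W := Multiset.dvd_prod hqQ
          have h1 : 1 ≤ count (Ideal.comap f P) (normalizedFactors W) :=
            (dvd_iff_one_le_count hWb hqprime).1 hqWd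
          have h2 : Tc ≤ count (Ideal.comap f P) (normalizedFactors Y) := by
            rw [hcountY]
            have : Tc * 1 ≤ Tc * count (Ideal.comap f P) (normalizedFactors W) :=
              Nat.mul_le_mul_left _ h1
            omega
          have h3 : Tc ≤ count (Ideal.comap f P) (normalizedFactors (Ideal.span {y})) :=
            le_trans h2 (hcounty _)
          calc count P (normalizedFactors 𝔄) ≤ Tc := by
                rw [hTc]; exact Multiset.count_le_card _ _
            _ ≤ count (Ideal.comap f P) (normalizedFactors (Ideal.span {y})) * 1 := by omega
            _ ≤ count (Ideal.comap f P) (normalizedFactors (Ideal.span {y})) *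
                count P (normalizedFactors (Ideal.map f (Ideal.comap f P))) :=
                Nat.mul_le_mul_left _ heP
      have : Ideal.map f (Ideal.span {y}) ≤ 𝔄 := Ideal.le_of_dvd hdvd𝔄
      rw [Ideal.map_span, Set.image_singleton, Ideal.span_singleton_le_iff_mem] at this
      exact this
    have hspanC : Ideal.span {y} ≤ C := (Ideal.span_singleton_le_iff_mem _).2 hyC
    have := count_le_of_ideal_ge hspanC hyb J
    omega
  · exact sup_le (Ideal.comap_mono le_sup_left)
      (le_trans Ideal.le_comap_map (Ideal.comap_mono le_sup_right))
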